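/- (Symmetry of basic neighborhoods.) Assume the Markov intersection property holds and every vertex has a finite basic neighborhood ne(v). Define the graph G = (V, E) by (v,w) ∈ E iff w ∈ ne(v). Then G is undirected: if w ∈ ne(v) then v ∈ ne(w). -/

import Mathlib

open MeasureTheory

/-- Probability of the cylinder event determined by the configuration `a` on the
finite set of vertices `Δ`. -/
noncomputable def cylProb {V A : Type*} [MeasurableSpace A]
    (μ : Measure (V → A)) (Δ : Finset V) (a : V → A) : ℝ :=
  (μ {x | ∀ w ∈ Δ, x w = a w}).toReal

/-- Conditional probability `p(a_v | a_Δ)` that `X v = av` given the configuration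
`a` on the finite set `Δ` (junk value `0` if the conditioning event is null). -/
noncomputable def condProb {V A : Type*} [MeasurableSpace A]
    (μ : Measure (V → A)) (v : V) (av : A) (Δ : Finset V) (a : V → A) : ℝ :=
  (μ {x | x v = av ∧ ∀ w ∈ Δ, x w = a w}).toReal / cylProb μ Δ a

/-- `W` is a Markov neighborhood of `v`: `v ∉ W` and conditioning on any finite
superset `Δ ⊇ W` not containing `v` gives the same conditional distribution of
`X v`, over all positive-probability configurations. -/
def IsMarkovNbhd {V A : Type*} [MeasurableSpace A]
    (μ : Measure (V → A)) (v : V) (W : Finset V) : Prop :=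
  v ∉ W ∧ ∀ (Δ : Finset V), W ⊆ Δ → v ∉ Δ → ∀ (av : A) (a : V → A),
    0 < cylProb μ Δ a → condProb μ v av Δ a = condProb μ v av W a

section Aux

variable {V A : Type*} [DecidableEq V] [MeasurableSpace A]
  (μ : Measure (V → A)) [IsProbabilityMeasure μ]

lemma cylProb_nonneg (Δ : Finset V) (a : V → A) : 0 ≤ cylProb μ Δ a :=
  ENNReal.toReal_nonneg

lemma cylProb_mono {Δ Δ' : Finset V} (h : Δ ⊆ Δ') (a : V → A) :
    cylProb μ Δ' a ≤ cylProb μ Δ a :=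
  ENNReal.toReal_mono (measure_ne_top μ _)
    (measure_mono fun x hx u hu => hx u (h hu))

lemma cylProb_congr {Δ : Finset V} {a a' : V → A} (h : ∀ u ∈ Δ, a u = a' u) :
    cylProb μ Δ a = cylProb μ Δ a' := by
  have hs : {x : V → A | ∀ u ∈ Δ, x u = a u} = {x | ∀ u ∈ Δ, x u = a' u} := by
    ext x; exact forall₂_congr fun u hu => by rw [h u hu]
  unfold cylProb; rw [hs]

lemma condProb_eq_div (v : V) (Δ : Finset V) (a : V → A) :
    condProb μ v (a v) Δ a = cylProb μ (insert v Δ) a / cylProb μ Δ a := by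
  have hs : {x : V → A | x v = a v ∧ ∀ u ∈ Δ, x u = a u}
      = {x | ∀ u ∈ insert v Δ, x u = a u} := by
    ext x; simp [Finset.forall_mem_insert]
  unfold condProb cylProb; rw [hs]

lemma condProb_congr (v : V) (av : A) {Δ : Finset V} {a a' : V → A}
    (h : ∀ u ∈ Δ, a u = a' u) :
    condProb μ v av Δ a = condProb μ v av Δ a' := by
  have hs : {x : V → A | x v = av ∧ ∀ u ∈ Δ, x u = a u}
      = {x | x v = av ∧ ∀ u ∈ Δ, x u = a' u} := by
    ext x; exact and_congr_right fun _ => forall₂_congr fun u hu => by rw [h u hu]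
  unfold condProb; rw [hs, cylProb_congr μ h]

lemma exists_pos_ext [Fintype A] {Δ : Finset V} {w : V} (hw : w ∉ Δ) {a : V → A}
    (h : 0 < cylProb μ Δ a) :
    ∃ b : A, 0 < cylProb μ (insert w Δ) (Function.update a w b) := by
  by_contra hc
  push_neg at hc
  have hzero : ∀ b : A,
      μ {x : V → A | ∀ u ∈ insert w Δ, x u = Function.update a w b u} = 0 := by
    intro b
    have h0 : cylProb μ (insert w Δ) (Function.update a w b) = 0 :=
      le_antisymm (hc b) (cylProb_nonneg μ _ _)
    have := (ENNReal.toReal_eq_zero_iff _).1 h0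
    exact this.resolve_right (measure_ne_top μ _)
  have hsub : {x : V → A | ∀ u ∈ Δ, x u = a u}
      ⊆ ⋃ b : A, {x : V → A | ∀ u ∈ insert w Δ, x u = Function.update a w b u} := by
    intro x hx
    refine Set.mem_iUnion.2 ⟨x w, fun u hu => ?_⟩
    rcases Finset.mem_insert.1 hu with rfl | hu'
    · simp
    · have huw : u ≠ w := fun e => hw (e ▸ hu')
      rw [Function.update_of_ne huw]
      exact hx u hu'
  have hz : μ {x : V → A | ∀ u ∈ Δ, x u = a u} = 0 := by
    refine le_antisymm ?_ zero_le
    calc μ {x : V → A | ∀ u ∈ Δ, x u = a u}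
        ≤ μ (⋃ b : A, {x : V → A | ∀ u ∈ insert w Δ, x u = Function.update a w b u}) :=
          measure_mono hsub
      _ ≤ ∑' b : A, μ {x : V → A | ∀ u ∈ insert w Δ, x u = Function.update a w b u} :=
          measure_iUnion_le _
      _ = 0 := by simp only [hzero, tsum_zero]
  have : cylProb μ Δ a = 0 := by unfold cylProb; rw [hz]; simp
  linarith

lemma drop_vertex {v w : V} {W : Finset V}
    (hMw : ∀ (Δ : Finset V), W ⊆ Δ → w ∉ Δ → ∀ (aw : A) (a : V → A),
      0 < cylProb μ Δ a → condProb μ w aw Δ a = condProb μ w aw W a)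
    {Γ : Finset V} (hΓ : W ⊆ Γ) (hvΓ : v ∉ Γ) (hwΓ : w ∉ Γ) (hvw : v ≠ w)
    (a : V → A) (hpos : 0 < cylProb μ (insert w Γ) a) :
    condProb μ v (a v) (insert w Γ) a = condProb μ v (a v) Γ a := by
  have hp0 : 0 < cylProb μ Γ a :=
    lt_of_lt_of_le hpos (cylProb_mono μ (Finset.subset_insert _ _) a)
  rw [condProb_eq_div, condProb_eq_div]
  by_cases hpv : 0 < cylProb μ (insert v Γ) a
  · have hwvΓ : w ∉ insert v Γ := fun h =>
      (Finset.mem_insert.1 h).elim (fun e => hvw e.symm) hwΓ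
    have h1 := hMw (insert v Γ) (hΓ.trans (Finset.subset_insert _ _)) hwvΓ (a w) a hpv
    have h2 := hMw Γ hΓ hwΓ (a w) a hp0
    have key := h1.trans h2.symm
    rw [condProb_eq_div, condProb_eq_div, Finset.insert_comm] at key
    rw [div_eq_div_iff (ne_of_gt hpv) (ne_of_gt hp0)] at key
    rw [div_eq_div_iff (ne_of_gt hpos) (ne_of_gt hp0), key]
    ring
  · have hpv0 : cylProb μ (insert v Γ) a = 0 :=
      le_antisymm (not_lt.1 hpv) (cylProb_nonneg μ _ _)
    have hvw0 : cylProb μ (insert v (insert w Γ)) a = 0 :=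
      le_antisymm
        ((cylProb_mono μ (Finset.insert_subset_insert v (Finset.subset_insert w Γ)) a).trans
          hpv0.le)
        (cylProb_nonneg μ _ _)
    rw [hpv0, hvw0, zero_div, zero_div]

lemma reduce_to_base {v w : V} {Wv Ww : Finset V}
    (hMv : ∀ (Δ : Finset V), Wv ⊆ Δ → v ∉ Δ → ∀ (av : A) (a : V → A),
      0 < cylProb μ Δ a → condProb μ v av Δ a = condProb μ v av Wv a)
    (hMw : ∀ (Δ : Finset V), Ww ⊆ Δ → w ∉ Δ → ∀ (aw : A) (a : V → A),
      0 < cylProb μ Δ a → condProb μ w aw Δ a = condProb μ w aw Ww a)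
    {Γ : Finset V} (hΓw : Ww ⊆ Γ) (hΓv : Wv ⊆ insert w Γ)
    (hvΓ : v ∉ Γ) (hwΓ : w ∉ Γ) (hvw : v ≠ w) (hvWv : v ∉ Wv)
    (av : A) (a : V → A) (b : A)
    (hpos : 0 < cylProb μ (insert w Γ) (Function.update a w b)) :
    condProb μ v av Γ a = condProb μ v av Wv (Function.update a w b) := by
  set a' := Function.update a w b with ha'
  set a'' := Function.update a' v av with ha''
  have hv'' : a'' v = av := by rw [ha'']; exact Function.update_self v av a'
  have hvwΓ : v ∉ insert w Γ := fun h =>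
    (Finset.mem_insert.1 h).elim hvw hvΓ
  have hpos'' : 0 < cylProb μ (insert w Γ) a'' := by
    have e1 : cylProb μ (insert w Γ) a' = cylProb μ (insert w Γ) a'' :=
      cylProb_congr μ (fun u hu => by
        have h1 : u ≠ v := fun e => hvwΓ (e ▸ hu)
        rw [ha'', Function.update_of_ne h1])
    rwa [e1] at hpos
  have step0 : condProb μ v av Γ a = condProb μ v av Γ a'' :=
    condProb_congr μ v av (fun u hu => by
      have h1 : u ≠ v := fun e => hvΓ (e ▸ hu)
      have h2 : u ≠ w := fun e => hwΓ (e ▸ hu)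
      rw [ha'', ha', Function.update_of_ne h1, Function.update_of_ne h2])
  have hd := drop_vertex μ hMw hΓw hvΓ hwΓ hvw a'' hpos''
  have hm := hMv (insert w Γ) hΓv hvwΓ (a'' v) a'' hpos''
  calc condProb μ v av Γ a = condProb μ v av Γ a'' := step0
    _ = condProb μ v (a'' v) Γ a'' := by rw [hv'']
    _ = condProb μ v (a'' v) (insert w Γ) a'' := hd.symm
    _ = condProb μ v (a'' v) Wv a'' := hm
    _ = condProb μ v av Wv a'' := by rw [hv'']
    _ = condProb μ v av Wv a' :=
      condProb_congr μ v av (fun u hu => by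
        have h1 : u ≠ v := fun e => hvWv (e ▸ hu)
        rw [ha'', Function.update_of_ne h1])

end Aux

/-- Symmetry of basic neighborhoods: assume the Markov intersection property and
that every vertex `v` has a smallest (basic) Markov neighborhood `ne v`. Define the
graph with an edge `(v,w)` iff `w ∈ ne v`; then the graph is undirected, i.e.
`w ∈ ne v` implies `v ∈ ne w`. -/
theorem basic_neighborhood_symm {V A : Type*} [Countable V] [DecidableEq V]
    [MeasurableSpace A] [Fintype A]
    (μ : Measure (V → A)) [IsProbabilityMeasure μ]
    (hinter : ∀ (v : V) (W₁ W₂ : Finset V), IsMarkovNbhd μ v W₁ → IsMarkovNbhd μ v W₂ →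
      IsMarkovNbhd μ v (W₁ ∩ W₂))
    (ne : V → Finset V)
    (hne : ∀ v, IsMarkovNbhd μ v (ne v) ∧
      ∀ W : Finset V, IsMarkovNbhd μ v W → ne v ⊆ W)
    (v w : V) (hw : w ∈ ne v) :
    v ∈ ne w := by
  by_contra hcon
  obtain ⟨⟨hvnev, hMv⟩, hminv⟩ := hne v
  obtain ⟨⟨hwnew, hMw⟩, -⟩ := hne w
  have hvw : v ≠ w := fun h => hvnev (h ▸ hw)
  set N : Finset V := (ne v ∪ ne w).erase w with hN
  have hwN : w ∉ N := Finset.notMem_erase w _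
  have hvN : v ∉ N := fun h => by
    rcases Finset.mem_union.1 (Finset.mem_of_mem_erase h) with h1 | h2
    · exact hvnev h1
    · exact hcon h2
  -- generic facts for any Δ ⊇ N
  have hsubW : ∀ (Δ : Finset V), N ⊆ Δ → ne w ⊆ Δ ∧ ne v ⊆ insert w Δ := by
    intro Δ hNΔ
    constructor
    · intro u hu
      exact hNΔ (Finset.mem_erase.2 ⟨fun e => hwnew (e ▸ hu), Finset.mem_union_right _ hu⟩)
    · intro u hu
      by_cases h : u = w
      · exact Finset.mem_insert.2 (Or.inl h)
      · exact Finset.mem_insert.2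
          (Or.inr (hNΔ (Finset.mem_erase.2 ⟨h, Finset.mem_union_left _ hu⟩)))
  obtain ⟨hnewN, hnevwN⟩ := hsubW N (Finset.Subset.refl N)
  have hNnbhd : IsMarkovNbhd μ v N := by
    refine ⟨hvN, fun Δ hNΔ hvΔ av a hpos => ?_⟩
    obtain ⟨hnewΔ, hnevwΔ⟩ := hsubW Δ hNΔ
    by_cases hwΔ : w ∈ Δ
    · have hΔv : ne v ⊆ Δ := fun u hu =>
        (Finset.mem_insert.1 (hnevwΔ hu)).elim (fun e => e ▸ hwΔ) id
      have L : condProb μ v av Δ a = condProb μ v av (ne v) a := hMv Δ hΔv hvΔ av a hpos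
      have hposN : 0 < cylProb μ (insert w N) (Function.update a w (a w)) := by
        rw [Function.update_eq_self]
        exact lt_of_lt_of_le hpos (cylProb_mono μ (Finset.insert_subset hwΔ hNΔ) a)
      have R : condProb μ v av N a
          = condProb μ v av (ne v) (Function.update a w (a w)) :=
        reduce_to_base μ hMv hMw hnewN hnevwN hvN hwN hvw hvnev av a (a w) hposN
      rw [Function.update_eq_self] at R
      rw [L, R]
    · obtain ⟨b, hb⟩ := exists_pos_ext μ hwΔ hpos
      have L : condProb μ v av Δ a = condProb μ v av (ne v) (Function.update a w b) :=
        reduce_to_base μ hMv hMw hnewΔ hnevwΔ hvΔ hwΔ hvw hvnev av a b hb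
      have hbN : 0 < cylProb μ (insert w N) (Function.update a w b) :=
        lt_of_lt_of_le hb (cylProb_mono μ (Finset.insert_subset_insert w hNΔ) _)
      have R : condProb μ v av N a = condProb μ v av (ne v) (Function.update a w b) :=
        reduce_to_base μ hMv hMw hnewN hnevwN hvN hwN hvw hvnev av a b hbN
      rw [L, R]
  exact hwN (hminv N hNnbhd hw)
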